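/- Let η : ℤ → ℤ be a bijection and define R(x) := |{i ≤ x : η(i) ≤ η(x)}| (assumed finite for all x). Fix a ∈ ℤ with η(a) > η(a+1), and let η' be obtained by swapping the values of η at a and a+1. Let R' be defined from η' analogously. Then R(a) ≥ R(a+1), R'(a) = R(a+1), R'(a+1) = R(a) + 1, and R'(y) = R(y) for all y ∉ {a, a+1}. Conversely, if η(a) < η(a+1) then R(a) < R(a+1). -/
import Mathlib


/-- Local update rule of the TASEP ranking process. `η : ℤ ≃ ℤ` is a multi-type TASEP
configuration, `R x = |{i ≤ x : η i ≤ η x}|` the rank, `η'` the configuration after the swap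
at bond `(a, a+1)`, and `R'` its rank function. -/
theorem tasep_ranking_update (η : ℤ ≃ ℤ) (a : ℤ)
    (hfin : ∀ x : ℤ, {i : ℤ | i ≤ x ∧ η i ≤ η x}.Finite)
    (η' : ℤ → ℤ)
    (hη' : η' a = η (a + 1) ∧ η' (a + 1) = η a ∧ ∀ y : ℤ, y ≠ a → y ≠ a + 1 → η' y = η y)
    (R R' : ℤ → ℕ)
    (hR : ∀ x : ℤ, R x = {i : ℤ | i ≤ x ∧ η i ≤ η x}.ncard)
    (hR' : ∀ x : ℤ, R' x = {i : ℤ | i ≤ x ∧ η' i ≤ η' x}.ncard) :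
    (η (a + 1) < η a →
      R (a + 1) ≤ R a ∧ R' a = R (a + 1) ∧ R' (a + 1) = R a + 1 ∧
        ∀ y : ℤ, y ≠ a → y ≠ a + 1 → R' y = R y) ∧
    (η a < η (a + 1) → R a < R (a + 1)) := by
  obtain ⟨h1, h2, h3⟩ := hη'
  constructor
  · intro h
    set A : Set ℤ := {i : ℤ | i < a ∧ η i ≤ η (a + 1)} with hA
    set B : Set ℤ := {i : ℤ | i < a ∧ η i ≤ η a} with hB
    have hAfin : A.Finite := (hfin (a + 1)).subset (fun i hi => ⟨by linarith [hi.1], hi.2⟩)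
    have hBfin : B.Finite := (hfin a).subset (fun i hi => ⟨le_of_lt hi.1, hi.2⟩)
    have haA : a ∉ A := fun hc => absurd hc.1 (by omega)
    have ha1A : a + 1 ∉ A := fun hc => absurd hc.1 (by omega)
    have haB : a ∉ B := fun hc => absurd hc.1 (by omega)
    have ha1B : a + 1 ∉ B := fun hc => absurd hc.1 (by omega)
    -- S(a+1) = insert (a+1) A
    have eSa1 : {i : ℤ | i ≤ a + 1 ∧ η i ≤ η (a + 1)} = insert (a + 1) A := by
      ext i
      simp only [Set.mem_setOf_eq, Set.mem_insert_iff, hA]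
      constructor
      · rintro ⟨hi, hle⟩
        by_cases hcase : i = a + 1
        · exact Or.inl hcase
        · right
          refine ⟨?_, hle⟩
          by_cases hia : i = a
          · subst hia; exact absurd hle (not_le.2 h)
          · omega
      · rintro (rfl | ⟨hi, hle⟩)
        · exact ⟨le_refl _, le_refl _⟩
        · exact ⟨by omega, hle⟩
    -- S a = insert a B
    have eSa : {i : ℤ | i ≤ a ∧ η i ≤ η a} = insert a B := by
      ext i
      simp only [Set.mem_setOf_eq, Set.mem_insert_iff, hB]
      constructor
      · rintro ⟨hi, hle⟩
        rcases eq_or_lt_of_le hi with hcase | hcase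
        · exact Or.inl hcase
        · exact Or.inr ⟨hcase, hle⟩
      · rintro (rfl | ⟨hi, hle⟩)
        · exact ⟨le_refl _, le_refl _⟩
        · exact ⟨le_of_lt hi, hle⟩
    -- S' a = insert a A
    have eS'a : {i : ℤ | i ≤ a ∧ η' i ≤ η' a} = insert a A := by
      ext i
      simp only [Set.mem_setOf_eq, Set.mem_insert_iff, hA]
      constructor
      · rintro ⟨hi, hle⟩
        rcases eq_or_lt_of_le hi with hcase | hcase
        · exact Or.inl hcase
        · right
          rw [h3 i (by omega) (by omega), h1] at hle
          exact ⟨hcase, hle⟩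
      · rintro (rfl | ⟨hi, hle⟩)
        · exact ⟨le_refl _, le_refl _⟩
        · refine ⟨le_of_lt hi, ?_⟩
          rw [h3 i (by omega) (by omega), h1]
          exact hle
    -- S'(a+1) = insert (a+1) (insert a B)
    have eS'a1 : {i : ℤ | i ≤ a + 1 ∧ η' i ≤ η' (a + 1)} =
        insert (a + 1) (insert a B) := by
      ext i
      simp only [Set.mem_setOf_eq, Set.mem_insert_iff, hB]
      constructor
      · rintro ⟨hi, hle⟩
        by_cases hcase : i = a + 1
        · exact Or.inl hcase
        · by_cases hia : i = a
          · exact Or.inr (Or.inl hia)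
          · right; right
            rw [h3 i hia hcase, h2] at hle
            exact ⟨by omega, hle⟩
      · rintro (rfl | rfl | ⟨hi, hle⟩)
        · exact ⟨le_refl _, le_refl _⟩
        · exact ⟨by omega, by rw [h1, h2]; exact le_of_lt h⟩
        · refine ⟨by omega, ?_⟩
          rw [h3 i (by omega) (by omega), h2]
          exact hle
    have cA : (insert (a + 1) A).ncard = A.ncard + 1 :=
      Set.ncard_insert_of_notMem ha1A hAfin
    have cA' : (insert a A).ncard = A.ncard + 1 :=
      Set.ncard_insert_of_notMem haA hAfin
    have cB : (insert a B).ncard = B.ncard + 1 :=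
      Set.ncard_insert_of_notMem haB hBfin
    have cB' : (insert (a + 1) (insert a B)).ncard = B.ncard + 2 := by
      rw [Set.ncard_insert_of_notMem (by simp only [Set.mem_insert_iff]; push_neg; exact ⟨by omega, ha1B⟩)
        (hBfin.insert a), cB]
    refine ⟨?_, ?_, ?_, ?_⟩
    · rw [hR, hR, eSa1, eSa, cA, cB]
      have hsub : A ⊆ B := fun i hi => ⟨hi.1, le_trans hi.2 (le_of_lt h)⟩
      exact Nat.add_le_add_right (Set.ncard_le_ncard hsub hBfin) 1
    · rw [hR' , hR, eS'a, eSa1, cA', cA]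
    · rw [hR', hR, eS'a1, eSa, cB', cB]
    · intro y hy hy2
      rw [hR', hR]
      have hηy : η' y = η y := h3 y hy hy2
      rcases (by omega : y < a ∨ a + 1 < y) with hc | hc
      · congr 1
        ext i
        simp only [Set.mem_setOf_eq, hηy]
        constructor
        · rintro ⟨hi, hle⟩
          rw [h3 i (by omega) (by omega)] at hle
          exact ⟨hi, hle⟩
        · rintro ⟨hi, hle⟩
          refine ⟨hi, ?_⟩
          rw [h3 i (by omega) (by omega)]
          exact hle
      · have hne1 : η y ≠ η a := fun e => hy (η.injective e)
        have hne2 : η y ≠ η (a + 1) := fun e => hy2 (η.injective e)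
        rcases lt_or_ge (η y) (η (a + 1)) with hc1 | hc1
        · -- η y < η (a+1) < η a : both a and a+1 excluded from both sets
          have key : ∀ i : ℤ, η' i ≤ η y ↔ η i ≤ η y := by
            intro i
            by_cases hia : i = a
            · subst hia
              rw [h1]
              constructor <;> intro hle <;> linarith
            · by_cases hib : i = a + 1
              · subst hib
                rw [h2]
                constructor <;> intro hle <;> linarith
              · rw [h3 i hia hib]
          congr 1
          ext i
          simp only [Set.mem_setOf_eq, hηy, key i]
        · have hc1' : η (a + 1) < η y := lt_of_le_of_ne hc1 (Ne.symm hne2)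
          rcases lt_or_ge (η y) (η a) with hc2 | hc2
          · -- η (a+1) < η y < η a : a+1 ∈ S y but a ∉; a ∈ S' y but a+1 ∉
            set C : Set ℤ := {i : ℤ | i ≤ y ∧ i ≠ a ∧ i ≠ a + 1 ∧ η i ≤ η y}
              with hC
            have hCfin : C.Finite :=
              (hfin y).subset (fun i hi => ⟨hi.1, hi.2.2.2⟩)
            have haC : a ∉ C := fun hcon => hcon.2.1 rfl
            have ha1C : a + 1 ∉ C := fun hcon => hcon.2.2.1 rfl
            have eq1 : {i : ℤ | i ≤ y ∧ η i ≤ η y} = insert (a + 1) C := by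
              ext i
              simp only [Set.mem_setOf_eq, Set.mem_insert_iff, hC]
              constructor
              · rintro ⟨hi, hle⟩
                by_cases hib : i = a + 1
                · exact Or.inl hib
                · have hia : i ≠ a := by
                    rintro rfl; exact absurd hle (not_le.2 hc2)
                  exact Or.inr ⟨hi, hia, hib, hle⟩
              · rintro (rfl | ⟨hi, _, _, hle⟩)
                · exact ⟨by omega, le_of_lt hc1'⟩
                · exact ⟨hi, hle⟩
            have eq2 : {i : ℤ | i ≤ y ∧ η' i ≤ η' y} = insert a C := by
              ext i
              simp only [Set.mem_setOf_eq, Set.mem_insert_iff, hC, hηy]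
              constructor
              · rintro ⟨hi, hle⟩
                by_cases hia : i = a
                · exact Or.inl hia
                · by_cases hib : i = a + 1
                  · subst hib
                    rw [h2] at hle
                    exact absurd hle (not_le.2 hc2)
                  · rw [h3 i hia hib] at hle
                    exact Or.inr ⟨hi, hia, hib, hle⟩
              · rintro (rfl | ⟨hi, hia, hib, hle⟩)
                · exact ⟨by omega, by rw [h1]; exact le_of_lt hc1'⟩
                · refine ⟨hi, ?_⟩
                  rw [h3 i hia hib]
                  exact hle
            rw [eq1, eq2, Set.ncard_insert_of_notMem haC hCfin,
              Set.ncard_insert_of_notMem ha1C hCfin]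
          · -- η a < η y : both a and a+1 included in both sets
            have hc2' : η a < η y := lt_of_le_of_ne hc2 (Ne.symm hne1)
            have key : ∀ i : ℤ, η' i ≤ η y ↔ η i ≤ η y := by
              intro i
              by_cases hia : i = a
              · subst hia
                rw [h1]
                constructor <;> intro hle <;> linarith
              · by_cases hib : i = a + 1
                · subst hib
                  rw [h2]
                  constructor <;> intro hle <;> linarith
                · rw [h3 i hia hib]
            congr 1
            ext i
            simp only [Set.mem_setOf_eq, hηy, key i]
  · intro h
    rw [hR, hR]
    have hsub : {i : ℤ | i ≤ a ∧ η i ≤ η a} ⊂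
        {i : ℤ | i ≤ a + 1 ∧ η i ≤ η (a + 1)} := by
      constructor
      · rintro i ⟨hi, hle⟩
        exact ⟨by omega, le_trans hle (le_of_lt h)⟩
      · intro hcon
        have := hcon (show a + 1 ∈ _ from ⟨le_refl _, le_refl _⟩)
        exact absurd this.1 (by omega)
    exact Set.ncard_lt_ncard hsub (hfin (a + 1))
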